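/- Let B : Matrix (Fin n) (Fin m) ℝ be an orientation matrix of a signed graph Σ (every column has exactly two nonzero entries, each ±1, in distinct rows; no two distinct columns have their nonzero entries in the same pair of rows), with adjacency matrix A := D − B * Bᵀ (D the diagonal of B * Bᵀ). Let T_C := Matrix.fromBlocks A B Bᵀ (2•1 − Bᵀ * B) and T_S := Matrix.fromBlocks A B Bᵀ (Bᵀ * B − 2•1). Then T_C is balanced if and only if m = 0, and T_S is balanced if and only if m = 0; that is, each total graph of Σ is balanced if and only if the underlying graph is totally disconnected (has no edges). -/

import Mathlib

open Matrix

/-- Each total graph of a signed graph `Σ` is balanced if and only if the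
underlying graph is totally disconnected (has no edges). -/
theorem total_graph_balanced_iff_no_edges
    (n m : ℕ) (B : Matrix (Fin n) (Fin m) ℝ)
    (hcol : ∀ e : Fin m, ∃ i j : Fin n, i ≠ j ∧
      (B i e = 1 ∨ B i e = -1) ∧ (B j e = 1 ∨ B j e = -1) ∧
      ∀ k : Fin n, k ≠ i → k ≠ j → B k e = 0)
    (hsupp : ∀ e f : Fin m, (∀ i : Fin n, B i e ≠ 0 ↔ B i f ≠ 0) → e = f) :
    let D : Matrix (Fin n) (Fin n) ℝ := Matrix.diagonal fun i => (B * Bᵀ) i i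
    let A : Matrix (Fin n) (Fin n) ℝ := D - B * Bᵀ
    let TC : Matrix (Fin n ⊕ Fin m) (Fin n ⊕ Fin m) ℝ :=
      Matrix.fromBlocks A B Bᵀ ((2 : ℝ) • 1 - Bᵀ * B)
    let TS : Matrix (Fin n ⊕ Fin m) (Fin n ⊕ Fin m) ℝ :=
      Matrix.fromBlocks A B Bᵀ (Bᵀ * B - (2 : ℝ) • 1)
    ((∃ S : Matrix (Fin n ⊕ Fin m) (Fin n ⊕ Fin m) ℝ,
      (∀ i j, i ≠ j → S i j = 0) ∧ (∀ i, S i i = 1 ∨ S i i = -1) ∧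
      ∀ i j, 0 ≤ (S * TC * S) i j) ↔ m = 0) ∧
    ((∃ S : Matrix (Fin n ⊕ Fin m) (Fin n ⊕ Fin m) ℝ,
      (∀ i j, i ≠ j → S i j = 0) ∧ (∀ i, S i i = 1 ∨ S i i = -1) ∧
      ∀ i j, 0 ≤ (S * TS * S) i j) ↔ m = 0) := by
  intro D A TC TS
  -- support characterization
  have hsuppc : ∀ (e : Fin m) (i j : Fin n), i ≠ j →
      (B i e = 1 ∨ B i e = -1) → (B j e = 1 ∨ B j e = -1) →
      (∀ k : Fin n, k ≠ i → k ≠ j → B k e = 0) →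
      ∀ k, B k e ≠ 0 ↔ (k = i ∨ k = j) := by
    intro e i j hij hi hj hz k
    constructor
    · intro hk
      by_contra hc
      push_neg at hc
      exact hk (hz k hc.1 hc.2)
    · rintro (rfl | rfl)
      · rcases hi with h | h <;> rw [h] <;> norm_num
      · rcases hj with h | h <;> rw [h] <;> norm_num
  -- forward direction, shared for TC and TS
  have forward : ∀ (M : Matrix (Fin n ⊕ Fin m) (Fin n ⊕ Fin m) ℝ),
      (∀ i e, M (Sum.inl i) (Sum.inr e) = B i e) →
      (∀ e j, M (Sum.inr e) (Sum.inl j) = B j e) →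
      (∀ i j, M (Sum.inl i) (Sum.inl j) = A i j) →
      (∃ S : Matrix (Fin n ⊕ Fin m) (Fin n ⊕ Fin m) ℝ,
        (∀ i j, i ≠ j → S i j = 0) ∧ (∀ i, S i i = 1 ∨ S i i = -1) ∧
        ∀ i j, 0 ≤ (S * M * S) i j) → m = 0 := by
    rintro M hM12 hM21 hM11 ⟨S, hSoff, hSd, hpos⟩
    by_contra hm
    obtain ⟨e⟩ : Nonempty (Fin m) := ⟨⟨0, Nat.pos_of_ne_zero hm⟩⟩
    obtain ⟨i, j, hij, hi, hj, hz⟩ := hcol e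
    have hSdiag : S = Matrix.diagonal (fun k => S k k) := by
      ext a b
      rcases eq_or_ne a b with rfl | h
      · simp
      · simp [Matrix.diagonal_apply_ne _ h, hSoff a b h]
    have hS : ∀ k l, (S * M * S) k l = S k k * M k l * S l l := by
      intro k l
      conv_lhs => rw [hSdiag]
      rw [Matrix.mul_diagonal, Matrix.diagonal_mul]
    -- A i j = -(B i e * B j e)
    have hsum : (B * Bᵀ) i j = B i e * B j e := by
      rw [Matrix.mul_apply]
      refine Finset.sum_eq_single_of_mem e (Finset.mem_univ e) ?_
      intro f _ hf
      by_contra hne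
      have hBif : B i f ≠ 0 := fun h => hne (by simp [h])
      have hBjf : B j f ≠ 0 := fun h => hne (by simp [h])
      obtain ⟨i', j', hij', hi', hj', hz'⟩ := hcol f
      have hsf := hsuppc f i' j' hij' hi' hj' hz'
      have hse := hsuppc e i j hij hi hj hz
      have hif : i = i' ∨ i = j' := (hsf i).mp hBif
      have hjf : j = j' ∨ j = i' := by
        rcases (hsf j).mp hBjf with h | h
        · exact Or.inr h
        · exact Or.inl h
      apply hf
      apply hsupp f e
      intro k
      rw [hsf k, hse k]
      rcases hif with rfl | rfl <;> rcases hjf with rfl | rfl <;> tauto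
    have hA : A i j = -(B i e * B j e) := by
      show (D - B * Bᵀ) i j = _
      rw [Matrix.sub_apply, hsum]
      show Matrix.diagonal _ i j - _ = _
      rw [Matrix.diagonal_apply_ne _ hij]
      ring
    have h1 := hpos (Sum.inl i) (Sum.inr e)
    have h2 := hpos (Sum.inr e) (Sum.inl j)
    have h3 := hpos (Sum.inl i) (Sum.inl j)
    rw [hS, hM12] at h1
    rw [hS, hM21] at h2
    rw [hS, hM11, hA] at h3
    rcases hSd (Sum.inl i) with hx | hx <;> rcases hSd (Sum.inl j) with hy | hy <;>
      rcases hSd (Sum.inr e) with hw | hw <;> rcases hi with ha | ha <;>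
      rcases hj with hb | hb <;>
      rw [hx, hw, ha] at h1 <;> rw [hw, hy, hb] at h2 <;>
      rw [hx, hy, ha, hb] at h3 <;> revert h1 h2 h3 <;> norm_num
  -- backward direction
  have backward : m = 0 → ∀ (M : Matrix (Fin n ⊕ Fin m) (Fin n ⊕ Fin m) ℝ),
      (∀ i j, M (Sum.inl i) (Sum.inl j) = A i j) →
      ∃ S : Matrix (Fin n ⊕ Fin m) (Fin n ⊕ Fin m) ℝ,
        (∀ i j, i ≠ j → S i j = 0) ∧ (∀ i, S i i = 1 ∨ S i i = -1) ∧
        ∀ i j, 0 ≤ (S * M * S) i j := by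
    intro hm M hM11
    refine ⟨1, fun i j h => Matrix.one_apply_ne h, fun i => Or.inl (Matrix.one_apply_eq i), ?_⟩
    intro i j
    rw [Matrix.one_mul, Matrix.mul_one]
    subst hm
    rcases i with i | i
    · rcases j with j | j
      · rw [hM11]
        have hBB : (B * Bᵀ) i j = 0 := by
          rw [Matrix.mul_apply]
          simp
        have hBBd : (B * Bᵀ) i i = 0 := by
          rw [Matrix.mul_apply]
          simp
        show 0 ≤ (D - B * Bᵀ) i j
        rw [Matrix.sub_apply, hBB]
        rcases eq_or_ne i j with rfl | h
        · show 0 ≤ Matrix.diagonal _ i i - 0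
          rw [Matrix.diagonal_apply_eq, hBBd]
          norm_num
        · show 0 ≤ Matrix.diagonal _ i j - 0
          rw [Matrix.diagonal_apply_ne _ h]
          norm_num
      · exact j.elim0
    · exact i.elim0
  constructor
  · constructor
    · exact forward TC (fun i e => rfl) (fun e j => rfl) (fun i j => rfl)
    · intro hm
      exact backward hm TC (fun i j => rfl)
  · constructor
    · exact forward TS (fun i e => rfl) (fun e j => rfl) (fun i j => rfl)
    · intro hm
      exact backward hm TS (fun i j => rfl)
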